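/- Let (g,J) be an 8-dimensional nilpotent Lie algebra with weakly non-nilpotent complex structure admitting a (1,0)-basis with equations dη¹ = 0, dη² = η¹³ + η^{1 3̄}, dη³ = iε η^{1 1̄} + iδ η^{1 2̄} − iδ η^{2 1̄}, dη⁴ = A η¹² + B η^{1 1̄} + η²³ + 2δε η^{1 3̄} + η^{2 3̄}, where ε ∈ {0,1}, δ = ±1, A,B ∈ ℂ (the case ν = 1). Then there is a (1,0)-basis {ω¹,…,ω⁴} in which the structure equations become dω¹ = 0, dω² = ω¹³ + ω^{1 3̄}, dω³ = iε ω^{1 1̄} + iδ ω^{1 2̄} − iδ ω^{2 1̄}, dω⁴ = a ω¹² + B' ω^{1 1̄} + ω²³ + 2δε ω^{1 3̄} + ω^{2 3̄}, with δ = ±1 and (ε, a, B') one of: (i) a = 0, B' ∈ {0,1} and ε = 0; (ii) a = 0, B' ∈ [0,∞) and ε = 1; (iii) a = 1, B' ∈ ℂ with Im B' ≥ 0 and ε = 0; (iv) a ∈ (0,∞), B' ∈ ℂ and ε = 1. -/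

import Mathlib

noncomputable section

open Complex Module
open scoped TensorProduct

namespace Paper

/-- The ascending central series of a real Lie algebra. -/
def ascSeries (g : Type*) [LieRing g] [LieAlgebra ℝ g] : ℕ → Submodule ℝ g
  | 0 => ⊥
  | k + 1 =>
    { carrier := {X : g | ∀ Y : g, ⁅X, Y⁆ ∈ ascSeries g k}
      add_mem' := fun ha hb Y => by
        rw [add_lie]; exact Submodule.add_mem _ (ha Y) (hb Y)
      zero_mem' := fun Y => by rw [zero_lie]; exact Submodule.zero_mem _
      smul_mem' := fun c x hx Y => by rw [smul_lie]; exact Submodule.smul_mem _ c (hx Y) }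

/-- A Lie algebra is nilpotent when its ascending central series reaches the whole algebra. -/
def IsNilpotentLie (g : Type*) [LieRing g] [LieAlgebra ℝ g] : Prop :=
  ∃ s : ℕ, ascSeries g s = ⊤

/-- A (integrable) complex structure on a real Lie algebra. -/
structure ComplexStructure (g : Type*) [LieRing g] [LieAlgebra ℝ g] where
  J : g →ₗ[ℝ] g
  j_sq : ∀ X : g, J (J X) = -X
  integrable : ∀ X Y : g, ⁅X, Y⁆ + J ⁅J X, Y⁆ + J ⁅X, J Y⁆ - ⁅J X, J Y⁆ = 0

namespace ComplexStructure

variable {g g' : Type*} [LieRing g] [LieAlgebra ℝ g] [LieRing g'] [LieAlgebra ℝ g']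

/-- The ascending `J`-compatible series `a_k(J)`. -/
def aSeries (Jc : ComplexStructure g) : ℕ → Submodule ℝ g
  | 0 => ⊥
  | k + 1 =>
    { carrier := {X : g | (∀ Y : g, ⁅X, Y⁆ ∈ aSeries Jc k) ∧ (∀ Y : g, ⁅Jc.J X, Y⁆ ∈ aSeries Jc k)}
      add_mem' := fun ha hb => by
        refine ⟨fun Y => ?_, fun Y => ?_⟩
        · rw [add_lie]; exact Submodule.add_mem _ (ha.1 Y) (hb.1 Y)
        · rw [map_add, add_lie]; exact Submodule.add_mem _ (ha.2 Y) (hb.2 Y)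
      zero_mem' := by
        refine ⟨fun Y => ?_, fun Y => ?_⟩
        · rw [zero_lie]; exact Submodule.zero_mem _
        · rw [map_zero, zero_lie]; exact Submodule.zero_mem _
      smul_mem' := fun c x hx => by
        refine ⟨fun Y => ?_, fun Y => ?_⟩
        · rw [smul_lie]; exact Submodule.smul_mem _ c (hx.1 Y)
        · rw [map_smul, smul_lie]; exact Submodule.smul_mem _ c (hx.2 Y) }

/-- Quasi-nilpotent complex structure: `a₁(J) ≠ 0`. -/
def IsQuasiNilpotent (Jc : ComplexStructure g) : Prop := Jc.aSeries 1 ≠ ⊥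

/-- Strongly non-nilpotent complex structure: `a₁(J) = 0`. -/
def IsSnN (Jc : ComplexStructure g) : Prop := Jc.aSeries 1 = ⊥

/-- Weakly non-nilpotent complex structure: `a₁(J) ≠ 0` and the ascending compatible series
stabilizes strictly below `g`. -/
def IsWnN (Jc : ComplexStructure g) : Prop :=
  Jc.aSeries 1 ≠ ⊥ ∧ ∃ t : ℕ, Jc.aSeries t ≠ ⊤ ∧ ∀ l : ℕ, 1 ≤ l → Jc.aSeries (t + l) = Jc.aSeries t

/-- Non-nilpotent complex structure: the ascending compatible series never reaches `g`. -/
def IsNonNilpotent (Jc : ComplexStructure g) : Prop := ∀ t : ℕ, Jc.aSeries t ≠ ⊤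

/-- Equivalence of complex structures. -/
def Equiv (Jc : ComplexStructure g) (Jc' : ComplexStructure g') : Prop :=
  ∃ f : g ≃ₗ⁅ℝ⁆ g', ∀ X : g, f (Jc.J X) = Jc'.J (f X)

end ComplexStructure


/-- Complex conjugate of a complex-valued form. -/
def cF {M : Type*} (α : M → ℂ) : M → ℂ := fun X => (starRingEnd ℂ) (α X)

/-- Wedge product of two 1-forms, as a 2-form. -/
def w2 {M R : Type*} [CommRing R] (α β : M → R) (X Y : M) : R := α X * β Y - α Y * β X

/-- Wedge product of three 1-forms, as a 3-form. -/
def w3 {M R : Type*} [CommRing R] (α β γ : M → R) (X Y Z : M) : R :=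
  α X * w2 β γ Y Z - α Y * w2 β γ X Z + α Z * w2 β γ X Y

/-- Wedge product of four 1-forms, as a 4-form. -/
def w4 {M R : Type*} [CommRing R] (α β γ η : M → R) (W X Y Z : M) : R :=
  α W * w3 β γ η X Y Z - α X * w3 β γ η W Y Z + α Y * w3 β γ η W X Z - α Z * w3 β γ η W X Y

/-- Chevalley–Eilenberg differential of a 1-form: `dα(X,Y) = -α([X,Y])`. -/
def dd {g R : Type*} [LieRing g] [CommRing R] (α : g → R) (X Y : g) : R := -α ⁅X, Y⁆

variable {g : Type*} [LieRing g] [LieAlgebra ℝ g]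

/-- `ω` is a basis of (1,0)-forms for `(g,J)` (here `dim ℝ g = 8`): each `ω k` is of bidegree
(1,0) for `J`, and the joint map `g → ℂ⁴` is bijective (so that `{ω^k, ω̄^k}` is a basis of the
complexified dual). -/
def Is10Basis (Jc : ComplexStructure g) (ω : Fin 4 → (g →ₗ[ℝ] ℂ)) : Prop :=
  (∀ (k : Fin 4) (X : g), ω k (Jc.J X) = Complex.I * ω k X) ∧
  Function.Bijective (fun (X : g) (k : Fin 4) => ω k X)

/-- The complex structure equations (★):
`dω¹ = 0`, `dω² = ω¹³ + ω^{1 3̄}`, `dω³ = iε ω^{1 1̄} + iδ ω^{1 2̄} − iδ ω^{2 1̄}`,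
`dω⁴ = A ω¹² + B ω^{1 1̄} + ν (ω²³ + 2δε ω^{1 3̄} + ω^{2 3̄})`. -/
def StarEq (ω : Fin 4 → (g →ₗ[ℝ] ℂ)) (ε δ ν : ℝ) (A B : ℂ) : Prop :=
  (∀ X Y : g, dd (⇑(ω 0)) X Y = 0) ∧
  (∀ X Y : g, dd (⇑(ω 1)) X Y = w2 (⇑(ω 0)) (⇑(ω 2)) X Y + w2 (⇑(ω 0)) (cF ⇑(ω 2)) X Y) ∧
  (∀ X Y : g, dd (⇑(ω 2)) X Y
      = Complex.I * (ε : ℂ) * w2 (⇑(ω 0)) (cF ⇑(ω 0)) X Y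
        + Complex.I * (δ : ℂ) * w2 (⇑(ω 0)) (cF ⇑(ω 1)) X Y
        - Complex.I * (δ : ℂ) * w2 (⇑(ω 1)) (cF ⇑(ω 0)) X Y) ∧
  (∀ X Y : g, dd (⇑(ω 3)) X Y
      = A * w2 (⇑(ω 0)) (⇑(ω 1)) X Y + B * w2 (⇑(ω 0)) (cF ⇑(ω 0)) X Y
        + (ν : ℂ) * (w2 (⇑(ω 1)) (⇑(ω 2)) X Y
            + 2 * (δ : ℂ) * (ε : ℂ) * w2 (⇑(ω 0)) (cF ⇑(ω 2)) X Y
            + w2 (⇑(ω 1)) (cF ⇑(ω 2)) X Y))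

/-- The admissible range of the parameters `(ε,δ,ν,a,B)` in Theorem 3.1. -/
def Admissible (ε δ ν a : ℝ) (B : ℂ) : Prop :=
  (ε = 0 ∨ ε = 1) ∧ (δ = 1 ∨ δ = -1) ∧
  ((ν = 0 ∧ a = 0 ∧ B = 0) ∨
   (ν = 0 ∧ a = 0 ∧ B = 1) ∨
   ((ν = 0 ∨ ν = 1) ∧ a = 1 - ν ∧ (∃ b : ℝ, 0 ≤ b ∧ B = (b : ℂ)) ∧
      (ε = 0 → (B = 0 ∨ B = 1))) ∨
   (ν = 1 ∧ 0 < a ∧ (ε = 0 → (a = 1 ∧ 0 ≤ B.im))))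

/-- A pseudo-Kähler structure on `(g,J)`: a closed, `J`-invariant, nondegenerate 2-form. -/
structure PseudoKahlerForm (Jc : ComplexStructure g) where
  F : g →ₗ[ℝ] g →ₗ[ℝ] ℝ
  antisymm : ∀ X Y : g, F X Y = -F Y X
  compat : ∀ X Y : g, F (Jc.J X) (Jc.J Y) = F X Y
  closed : ∀ X Y Z : g, F ⁅X, Y⁆ Z - F ⁅X, Z⁆ Y + F ⁅Y, Z⁆ X = 0
  nondeg : ∀ X : g, (∀ Y : g, F X Y = 0) → X = 0


lemma construct (Jc : ComplexStructure g)
    (η : Fin 4 → (g →ₗ[ℝ] ℂ)) (ε δ : ℝ) (A B : ℂ)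
    (hη : Is10Basis Jc η) (heq : StarEq η ε δ 1 A B)
    (s : ℂ) (u a : ℝ) (hs : s * (starRingEnd ℂ) s = 1) (hu : (u : ℂ) ≠ 0)
    (heu : (ε : ℂ) * (u : ℂ) = (ε : ℂ)) (ha : (u : ℂ) * A = (a : ℂ) * s) :
    ∃ ω : Fin 4 → (g →ₗ[ℝ] ℂ),
      Is10Basis Jc ω ∧ StarEq ω ε δ 1 (a : ℂ) (s * (u : ℂ) ^ 2 * B) := by
  have hs0 : s ≠ 0 := by
    intro h; rw [h] at hs; simp at hs
  set c : Fin 4 → ℂ := ![s, s * u, u, s * (u : ℂ) ^ 2] with hc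
  have hc0 : ∀ k : Fin 4, c k ≠ 0 := by
    intro k; fin_cases k <;> simp [hc] <;> [skip; exact ⟨hs0, fun h => hu (by exact_mod_cast h)⟩;
      exact fun h => hu (by exact_mod_cast h); exact ⟨hs0, fun h => hu (by exact_mod_cast h)⟩]
    · exact hs0
  refine ⟨fun k => c k • η k, ⟨fun k X => ?_, ?_, ?_⟩, ?_, ?_, ?_, ?_⟩
  · simp only [LinearMap.smul_apply, smul_eq_mul, hη.1 k X]; ring
  · intro X Y h
    apply hη.2.1
    funext k
    have := congrFun h k
    simp only [LinearMap.smul_apply, smul_eq_mul] at this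
    exact mul_left_cancel₀ (hc0 k) this
  · intro f
    obtain ⟨X, hX⟩ := hη.2.2 (fun k => (c k)⁻¹ * f k)
    refine ⟨X, ?_⟩
    funext k
    have := congrFun hX k
    simp only [LinearMap.smul_apply, smul_eq_mul, this]
    exact mul_inv_cancel_left₀ (hc0 k) _
  · intro X Y
    have h1 := heq.1 X Y
    simp only [dd, w2, cF, LinearMap.smul_apply, smul_eq_mul, map_mul, Complex.conj_ofReal,
      hc, Matrix.cons_val_zero, Matrix.cons_val_one, Matrix.head_cons] at h1 ⊢
    linear_combination s * h1
  · intro X Y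
    have h2 := heq.2.1 X Y
    simp only [dd, w2, cF, LinearMap.smul_apply, smul_eq_mul, map_mul, Complex.conj_ofReal,
      hc, Matrix.cons_val_zero, Matrix.cons_val_one, Matrix.head_cons, Matrix.cons_val_two,
      Matrix.tail_cons] at h2 ⊢
    linear_combination (s * (u : ℂ)) * h2
  · intro X Y
    have h3 := heq.2.2.1 X Y
    simp only [dd, w2, cF, LinearMap.smul_apply, smul_eq_mul, map_mul, Complex.conj_ofReal,
      hc, Matrix.cons_val_zero, Matrix.cons_val_one, Matrix.head_cons, Matrix.cons_val_two,
      Matrix.tail_cons] at h3 ⊢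
    linear_combination (u : ℂ) * h3
      - (Complex.I * (ε : ℂ) * (η 0 X * (starRingEnd ℂ) (η 0 Y) - η 0 Y * (starRingEnd ℂ) (η 0 X))
        + Complex.I * (δ : ℂ) * (u : ℂ) * (η 0 X * (starRingEnd ℂ) (η 1 Y) - η 0 Y * (starRingEnd ℂ) (η 1 X))
        - Complex.I * (δ : ℂ) * (u : ℂ) * (η 1 X * (starRingEnd ℂ) (η 0 Y) - η 1 Y * (starRingEnd ℂ) (η 0 X))) * hs
      + Complex.I * (η 0 X * (starRingEnd ℂ) (η 0 Y) - η 0 Y * (starRingEnd ℂ) (η 0 X)) * heu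
  · intro X Y
    have h4 := heq.2.2.2 X Y
    simp only [dd, w2, cF, LinearMap.smul_apply, smul_eq_mul, map_mul, Complex.conj_ofReal,
      hc, Matrix.cons_val_zero, Matrix.cons_val_one, Matrix.head_cons, Matrix.cons_val_two,
      Matrix.tail_cons, Matrix.cons_val_three, Complex.ofReal_one, one_mul] at h4 ⊢
    linear_combination (s * (u : ℂ) ^ 2) * h4
      + (s * (u : ℂ)) * (η 0 X * η 1 Y - η 0 Y * η 1 X) * ha
      - (s * (u : ℂ) ^ 2 * B) * (η 0 X * (starRingEnd ℂ) (η 0 Y) - η 0 Y * (starRingEnd ℂ) (η 0 X)) * hs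
      + 2 * (δ : ℂ) * s * (u : ℂ) * (η 0 X * (starRingEnd ℂ) (η 2 Y) - η 0 Y * (starRingEnd ℂ) (η 2 X)) * heu


lemma orim (x : ℝ) (z : ℂ) : ((x:ℂ) * z).im = x * z.im := by
  simp [Complex.mul_im]

lemma mulconj (z : ℂ) : z * (starRingEnd ℂ) z = ((‖z‖ ^ 2 : ℝ) : ℂ) := by
  rw [Complex.mul_conj, Complex.normSq_eq_norm_sq]


/-- Proposition 3.4: reduction of the structure equations (3.3) in the case ν = 1. -/
theorem reduction_nu_one
    {g : Type*} [LieRing g] [LieAlgebra ℝ g]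
    (h8 : Module.finrank ℝ g = 8) (hg : IsNilpotentLie g)
    (Jc : ComplexStructure g) (hw : Jc.IsWnN)
    (η : Fin 4 → (g →ₗ[ℝ] ℂ)) (ε δ : ℝ) (A B : ℂ)
    (hη : Is10Basis Jc η) (hε : ε = 0 ∨ ε = 1) (hδ : δ = 1 ∨ δ = -1)
    (heq : StarEq η ε δ 1 A B) :
    ∃ (ω : Fin 4 → (g →ₗ[ℝ] ℂ)) (a : ℝ) (B' : ℂ),
      Is10Basis Jc ω ∧ StarEq ω ε δ 1 (a : ℂ) B' ∧
      ((a = 0 ∧ (B' = 0 ∨ B' = 1) ∧ ε = 0) ∨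
       (a = 0 ∧ (∃ b : ℝ, 0 ≤ b ∧ B' = (b : ℂ)) ∧ ε = 1) ∨
       (a = 1 ∧ 0 ≤ B'.im ∧ ε = 0) ∨
       (0 < a ∧ ε = 1)) := by
  rcases hε with hε | hε <;> subst hε
  · -- ε = 0
    by_cases hA : A = 0
    · by_cases hB : B = 0
      · obtain ⟨ω, h1, h2⟩ := construct Jc η 0 δ A B hη heq 1 1 0
          (by simp) (by norm_num) (by norm_num) (by simp [hA])
        exact ⟨ω, 0, 1 * (1:ℂ)^2 * B, h1, by exact_mod_cast h2,
          Or.inl ⟨rfl, Or.inl (by simp [hB]), rfl⟩⟩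
      · set r : ℝ := ‖B‖ with hr
        have hr0 : 0 < r := by simpa [hr] using norm_pos_iff.2 hB
        set u : ℝ := Real.sqrt r⁻¹ with husq
        have hu0 : (0:ℝ) < u := Real.sqrt_pos.2 (by positivity)
        have husq2 : (u:ℝ)^2 = r⁻¹ := Real.sq_sqrt (by positivity)
        set s : ℂ := (starRingEnd ℂ) B / (r : ℂ) with hsdef
        have hrC : (r : ℂ) ≠ 0 := by exact_mod_cast hr0.ne'
        have hBB : (starRingEnd ℂ) B * B = ((r^2 : ℝ) : ℂ) := by
          rw [mul_comm, mulconj, ← hr]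
        have hs : s * (starRingEnd ℂ) s = 1 := by
          rw [hsdef, map_div₀, Complex.conj_conj, Complex.conj_ofReal,
            div_mul_div_comm, hBB]
          push_cast
          rw [← sq]
          exact div_self (pow_ne_zero 2 hrC)
        obtain ⟨ω, h1, h2⟩ := construct Jc η 0 δ A B hη heq s u 0
          hs (by exact_mod_cast hu0.ne') (by norm_num) (by simp [hA])
        refine ⟨ω, 0, s * (u:ℂ)^2 * B, h1, by exact_mod_cast h2,
          Or.inl ⟨rfl, Or.inr ?_, rfl⟩⟩
        have hcast : ((u:ℂ))^2 = ((r⁻¹ : ℝ) : ℂ) := by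
          rw [← husq2]; push_cast; ring
        rw [hsdef, hcast, div_mul_eq_mul_div, div_mul_eq_mul_div, mul_assoc,
          mul_comm ((r⁻¹:ℝ):ℂ) B, ← mul_assoc, hBB]
        push_cast
        field_simp
    · set r : ℝ := ‖A‖ with hr
      have hr0 : 0 < r := by simpa [hr] using norm_pos_iff.2 hA
      have hAA : A * (starRingEnd ℂ) A = ((r^2 : ℝ) : ℂ) := by
        rw [mulconj, ← hr]
      have key : ∀ u : ℝ, u = r⁻¹ ∨ u = -r⁻¹ →
          ∃ s : ℂ, s * (starRingEnd ℂ) s = 1 ∧ (u:ℂ) * A = ((1:ℝ):ℂ) * s ∧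
            s * (u:ℂ)^2 * B = ((u^3 : ℝ):ℂ) * (A * B) := by
        intro u hu
        refine ⟨(u:ℂ) * A, ?_, by push_cast; ring, by push_cast; ring⟩
        have hu2 : (u:ℝ)^2 = r⁻¹^2 := by rcases hu with h | h <;> rw [h] <;> ring
        have : (u:ℂ) * A * (starRingEnd ℂ) ((u:ℂ) * A)
            = ((u^2 : ℝ):ℂ) * (A * (starRingEnd ℂ) A) := by
          rw [map_mul, Complex.conj_ofReal]; push_cast; ring
        have hrC : (r : ℂ) ≠ 0 := by exact_mod_cast hr0.ne'
        rw [this, hAA, hu2]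
        push_cast
        field_simp
      by_cases him : 0 ≤ (A * B).im
      · obtain ⟨s, hs, ha, hB'⟩ := key r⁻¹ (Or.inl rfl)
        obtain ⟨ω, h1, h2⟩ := construct Jc η 0 δ A B hη heq s r⁻¹ 1
          hs (by exact_mod_cast (by positivity : (0:ℝ) < r⁻¹).ne') (by norm_num) ha
        refine ⟨ω, 1, s * ((r⁻¹:ℝ):ℂ)^2 * B, h1, by exact_mod_cast h2,
          Or.inr (Or.inr (Or.inl ⟨rfl, ?_, rfl⟩))⟩
        rw [hB', orim]
        exact mul_nonneg (by positivity) him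
      · obtain ⟨s, hs, ha, hB'⟩ := key (-r⁻¹) (Or.inr rfl)
        obtain ⟨ω, h1, h2⟩ := construct Jc η 0 δ A B hη heq s (-r⁻¹) 1
          hs (by exact_mod_cast neg_ne_zero.2 (ne_of_gt (by positivity : (0:ℝ) < r⁻¹))) (by norm_num) ha
        refine ⟨ω, 1, s * ((-r⁻¹:ℝ):ℂ)^2 * B, h1, by exact_mod_cast h2,
          Or.inr (Or.inr (Or.inl ⟨rfl, ?_, rfl⟩))⟩
        rw [hB', orim]
        push_neg at him
        have h3 : ((-r⁻¹)^3 : ℝ) = -(r⁻¹^3) := by ring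
        rw [h3]
        nlinarith [pow_pos (inv_pos.2 hr0) 3]
  · -- ε = 1
    by_cases hA : A = 0
    · by_cases hB : B = 0
      · obtain ⟨ω, h1, h2⟩ := construct Jc η 1 δ A B hη heq 1 1 0
          (by simp) (by norm_num) (by norm_num) (by simp [hA])
        exact ⟨ω, 0, 1 * (1:ℂ)^2 * B, h1, by exact_mod_cast h2,
          Or.inr (Or.inl ⟨rfl, ⟨0, le_refl 0, by simp [hB]⟩, rfl⟩)⟩
      · set r : ℝ := ‖B‖ with hr
        have hr0 : 0 < r := by simpa [hr] using norm_pos_iff.2 hB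
        have hrC : (r : ℂ) ≠ 0 := by exact_mod_cast hr0.ne'
        set s : ℂ := (starRingEnd ℂ) B / (r : ℂ) with hsdef
        have hBB : (starRingEnd ℂ) B * B = ((r^2 : ℝ) : ℂ) := by
          rw [mul_comm, mulconj, ← hr]
        have hs : s * (starRingEnd ℂ) s = 1 := by
          rw [hsdef, map_div₀, Complex.conj_conj, Complex.conj_ofReal,
            div_mul_div_comm, hBB]
          push_cast
          rw [← sq]
          exact div_self (pow_ne_zero 2 hrC)
        obtain ⟨ω, h1, h2⟩ := construct Jc η 1 δ A B hη heq s 1 0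
          hs (by norm_num) (by norm_num) (by simp [hA])
        refine ⟨ω, 0, s * ((1:ℝ):ℂ)^2 * B, h1, by exact_mod_cast h2,
          Or.inr (Or.inl ⟨rfl, ⟨r, hr0.le, ?_⟩, rfl⟩)⟩
        rw [hsdef]
        push_cast
        rw [one_pow, mul_one, div_mul_eq_mul_div, hBB]
        push_cast
        rw [sq]
        exact mul_div_cancel_right₀ _ hrC
    · set r : ℝ := ‖A‖ with hr
      have hr0 : 0 < r := by simpa [hr] using norm_pos_iff.2 hA
      have hrC : (r : ℂ) ≠ 0 := by exact_mod_cast hr0.ne'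
      set s : ℂ := A / (r : ℂ) with hsdef
      have hAA : A * (starRingEnd ℂ) A = ((r^2 : ℝ) : ℂ) := by
        rw [mulconj, ← hr]
      have hs : s * (starRingEnd ℂ) s = 1 := by
        rw [hsdef, map_div₀, Complex.conj_ofReal, div_mul_div_comm, hAA]
        push_cast
        rw [← sq]
        exact div_self (pow_ne_zero 2 hrC)
      obtain ⟨ω, h1, h2⟩ := construct Jc η 1 δ A B hη heq s 1 r
        hs (by norm_num) (by norm_num) (by rw [hsdef]; push_cast; field_simp)
      exact ⟨ω, r, s * ((1:ℝ):ℂ)^2 * B, h1, by exact_mod_cast h2,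
        Or.inr (Or.inr (Or.inr ⟨hr0, rfl⟩))⟩
  
end Paper
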